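/- arXiv:2506.22010 — 2 statements merged into one kernel-verified Lean document; each statement's English description precedes it below -/
import Mathlib

section
/- Let M be a matroid with finite ground set E, rank(M) = r ≥ 1, let k ≥ 0 be an integer, and let B ⊆ E be a set of size k + r. Then B is a k-fault-tolerant basis of M if and only if B is r-uniform. -/
open Set

/-- The rank of a set `X` in a matroid `M`: the maximum cardinality of an
independent subset of `X`. -/
noncomputable def mrank {α : Type*} (M : Matroid α) (X : Set α) : ℕ :=
  sSup {n : ℕ | ∃ I, M.Indep I ∧ I ⊆ X ∧ I.ncard = n}

/-- `B` is a `k`-fault-tolerant spanning set of `M`: `B ⊆ M.E` and removing any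
at most `k` elements from `B` leaves a set of full rank. -/
def FTSpanning {α : Type*} (M : Matroid α) (k : ℕ) (B : Set α) : Prop :=
  B ⊆ M.E ∧ ∀ F ⊆ B, F.ncard ≤ k → mrank M (B \ F) = mrank M M.E

/-- `B` is a `k`-fault-tolerant basis of `M`: a `k`-fault-tolerant spanning set of
minimum cardinality among all `k`-fault-tolerant spanning sets. -/
def FTBasis {α : Type*} (M : Matroid α) (k : ℕ) (B : Set α) : Prop :=
  FTSpanning M k B ∧ ∀ B', FTSpanning M k B' → B.ncard ≤ B'.ncard

/-- `X` is `h`-uniform in `M`: `rank(X) = h` and every subset of `X` of size `h`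
has rank `h`. -/
def HUniform {α : Type*} (M : Matroid α) (h : ℕ) (X : Set α) : Prop :=
  mrank M X = h ∧ ∀ Y ⊆ X, Y.ncard = h → mrank M Y = h

lemma mrank_setOf_nonempty {α : Type*} (M : Matroid α) (X : Set α) :
    {n : ℕ | ∃ I, M.Indep I ∧ I ⊆ X ∧ I.ncard = n}.Nonempty :=
  ⟨0, ∅, M.empty_indep, empty_subset _, ncard_empty _⟩

lemma mrank_setOf_bddAbove {α : Type*} (M : Matroid α) (hE : M.E.Finite) (X : Set α) :
    BddAbove {n : ℕ | ∃ I, M.Indep I ∧ I ⊆ X ∧ I.ncard = n} := by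
  refine ⟨M.E.ncard, fun n hn => ?_⟩
  obtain ⟨I, hI, -, rfl⟩ := hn
  exact ncard_le_ncard hI.subset_ground hE

lemma mrank_mono {α : Type*} (M : Matroid α) (hE : M.E.Finite) {X Y : Set α}
    (hXY : X ⊆ Y) : mrank M X ≤ mrank M Y := by
  refine csSup_le_csSup (mrank_setOf_bddAbove M hE Y) (mrank_setOf_nonempty M X) ?_
  rintro n ⟨I, hI, hIX, rfl⟩
  exact ⟨I, hI, hIX.trans hXY, rfl⟩

lemma mrank_eq_of_basis {α : Type*} (M : Matroid α) (hE : M.E.Finite) {I X : Set α}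
    (hI : M.IsBasis I X) : mrank M X = I.ncard := by
  apply le_antisymm
  · refine csSup_le (mrank_setOf_nonempty M X) ?_
    rintro n ⟨J, hJ, hJX, rfl⟩
    obtain ⟨J', hJ', hJJ'⟩ := hJ.subset_isBasis_of_subset hJX hI.subset_ground
    have h1 : J.ncard ≤ J'.ncard :=
      ncard_le_ncard hJJ' (hE.subset hJ'.indep.subset_ground)
    have h2 : J'.ncard = I.ncard := hJ'.isBase_restrict.ncard_eq_ncard_of_isBase hI.isBase_restrict
    omega
  · exact le_csSup (mrank_setOf_bddAbove M hE X) ⟨I, hI.indep, hI.subset, rfl⟩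

lemma mrank_indep {α : Type*} (M : Matroid α) (hE : M.E.Finite) {I : Set α}
    (hI : M.Indep I) : mrank M I = I.ncard :=
  mrank_eq_of_basis M hE hI.isBasis_self

/-- Let `M` be a matroid with finite ground set and rank `r ≥ 1`, `k ≥ 0`,
and `B ⊆ M.E` with `|B| = k + r`. Then `B` is a `k`-fault-tolerant basis of `M` if and
only if `B` is `r`-uniform. -/
theorem statement5 {α : Type*} (M : Matroid α) (hE : M.E.Finite)
    (r : ℕ) (hr : r = mrank M M.E) (hr1 : 1 ≤ r) (k : ℕ)
    (B : Set α) (hBE : B ⊆ M.E) (hBcard : B.ncard = k + r) :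
    FTBasis M k B ↔ HUniform M r B := by
  have hBfin : B.Finite := hE.subset hBE
  constructor
  · rintro ⟨⟨-, hspan⟩, -⟩
    have hB0 : mrank M B = r := by
      have := hspan ∅ (empty_subset B) (by simp)
      rwa [diff_empty, ← hr] at this
    refine ⟨hB0, fun Y hYB hYcard => ?_⟩
    have hF : B \ Y ⊆ B := diff_subset
    have hFcard : (B \ Y).ncard ≤ k := by
      rw [ncard_diff hYB (hBfin.subset hYB), hBcard, hYcard]
      omega
    have := hspan (B \ Y) hF hFcard
    rwa [diff_diff_right_self, inter_eq_self_of_subset_right hYB, ← hr] at this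
  · rintro ⟨hBr, hunif⟩
    have hspan : FTSpanning M k B := by
      refine ⟨hBE, fun F hFB hFcard => ?_⟩
      have hFfin : F.Finite := hBfin.subset hFB
      have hcard : r ≤ (B \ F).ncard := by
        rw [ncard_diff hFB hFfin, hBcard]
        omega
      obtain ⟨Y, hYBF, hYcard⟩ := exists_subset_card_eq hcard
      have hYr : mrank M Y = r := hunif Y (hYBF.trans diff_subset) hYcard
      have h1 : r ≤ mrank M (B \ F) := hYr ▸ mrank_mono M hE hYBF
      have h2 : mrank M (B \ F) ≤ mrank M M.E :=
        mrank_mono M hE (diff_subset.trans hBE)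
      omega
    refine ⟨hspan, fun B' hB' => ?_⟩
    obtain ⟨hB'E, hspan'⟩ := hB'
    have hB'fin : B'.Finite := hE.subset hB'E
    by_contra hlt
    push_neg at hlt
    rw [hBcard] at hlt
    -- mrank B' = r
    have hB'r : mrank M B' = r := by
      have := hspan' ∅ (empty_subset B') (by simp)
      rwa [diff_empty, ← hr] at this
    obtain ⟨I, hI⟩ := M.exists_isBasis B' hB'E
    have hIcard : I.ncard = r := by
      have := mrank_eq_of_basis M hE hI
      omega
    have hIfin : I.Finite := hB'fin.subset hI.subset
    have hIne : I.Nonempty := by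
      rw [← ncard_pos hIfin]; omega
    obtain ⟨e, he⟩ := hIne
    set F : Set α := insert e (B' \ I) with hFdef
    have hFB' : F ⊆ B' := by
      rw [hFdef]
      exact insert_subset (hI.subset he) diff_subset
    have hFcard : F.ncard ≤ k := by
      have h1 : F.ncard ≤ (B' \ I).ncard + 1 := ncard_insert_le _ _
      have h2 : (B' \ I).ncard = B'.ncard - I.ncard := ncard_diff hI.subset hIfin
      have h3 : I.ncard ≤ B'.ncard := ncard_le_ncard hI.subset hB'fin
      omega
    have hrk := hspan' F hFB' hFcard
    rw [← hr] at hrk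
    have hsub : B' \ F ⊆ I \ {e} := by
      rintro x ⟨hxB', hxF⟩
      rw [hFdef, mem_insert_iff, not_or, mem_diff, not_and, not_not] at hxF
      exact ⟨hxF.2 hxB', by simpa using hxF.1⟩
    have hIe : M.Indep (I \ {e}) := hI.indep.subset diff_subset
    have hle : mrank M (B' \ F) ≤ (I \ {e}).ncard := by
      have := mrank_mono M hE hsub
      rwa [mrank_indep M hE hIe] at this
    have hIecard : (I \ {e}).ncard = r - 1 := by
      rw [ncard_diff (singleton_subset_iff.mpr he) (finite_singleton e), hIcard, ncard_singleton]
    omega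
end

section
/- Let M be a matroid with finite ground set E, let h ≥ 2 be an integer, and let X ⊆ E be a set with rank(X) = h. Let Z ⊆ cl(X) be an h-uniform set that is inclusion-maximal among h-uniform subsets of cl(X) (i.e., there is no x ∈ cl(X) \ Z such that Z ∪ {x} is h-uniform). Then cl(X) equals the union of cl(S) taken over all subsets S ⊆ Z with |S| = h−1. -/
open Set

section Aux
variable {α : Type*} {M : Matroid α} {A B I : Set α}

lemma mrank_set_nonempty (M : Matroid α) (A : Set α) :
    {n : ℕ | ∃ I, M.Indep I ∧ I ⊆ A ∧ I.ncard = n}.Nonempty :=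
  ⟨0, ∅, M.empty_indep, empty_subset _, by simp⟩

lemma mrank_set_bdd (hA : A.Finite) :
    BddAbove {n : ℕ | ∃ I, M.Indep I ∧ I ⊆ A ∧ I.ncard = n} := by
  refine ⟨A.ncard, fun n hn => ?_⟩
  obtain ⟨I, -, hIA, rfl⟩ := hn
  exact ncard_le_ncard hIA hA

lemma mrank_eq_of_basis_s9 (hA : A.Finite) (hI : M.IsBasis I A) : mrank M A = I.ncard := by
  refine le_antisymm (csSup_le (mrank_set_nonempty M A) ?_)
    (le_csSup (mrank_set_bdd hA) ⟨I, hI.indep, hI.subset, rfl⟩)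
  rintro n ⟨J, hJ, hJA, rfl⟩
  obtain ⟨J', hJ'A, hJJ'⟩ := hJ.subset_isBasis_of_subset hJA hI.subset_ground
  have hcard := hJ'A.encard_eq_encard hI
  have hJ'fin : J'.Finite := (hA.subset hJ'A.subset)
  have : J'.ncard = I.ncard := by
    rw [ncard_def, hcard, ← ncard_def]
  exact this ▸ ncard_le_ncard hJJ' hJ'fin

lemma mrank_indep_s9 (hI : M.Indep I) (hfin : I.Finite) : mrank M I = I.ncard :=
  mrank_eq_of_basis_s9 hfin hI.isBasis_self

lemma mrank_le_ncard (hA : A.Finite) : mrank M A ≤ A.ncard :=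
  csSup_le (mrank_set_nonempty M A) (by rintro n ⟨I, -, hIA, rfl⟩; exact ncard_le_ncard hIA hA)

lemma mrank_mono_s9 (hAB : A ⊆ B) (hB : B.Finite) : mrank M A ≤ mrank M B :=
  csSup_le_csSup (mrank_set_bdd hB) (mrank_set_nonempty M A)
    (by rintro n ⟨I, hI, hIA, rfl⟩; exact ⟨I, hI, hIA.trans hAB, rfl⟩)

lemma mrank_closure_eq (hE : M.E.Finite) (X : Set α) (hXE : X ⊆ M.E) :
    mrank M (M.closure X) = mrank M X := by
  obtain ⟨I, hI⟩ := M.exists_isBasis X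
  rw [mrank_eq_of_basis_s9 (hE.subset (M.closure_subset_ground X)) hI.isBasis_closure_right,
    mrank_eq_of_basis_s9 (hE.subset hXE) hI]

lemma indep_of_mrank_eq_ncard (hA : A.Finite) (hAE : A ⊆ M.E)
    (h : mrank M A = A.ncard) : M.Indep A := by
  obtain ⟨I, hI⟩ := M.exists_isBasis A
  rw [mrank_eq_of_basis_s9 hA hI] at h
  exact (eq_of_subset_of_ncard_le hI.subset h.ge hA) ▸ hI.indep

lemma exists_indep_ncard_eq_mrank (hA : A.Finite) (hAE : A ⊆ M.E) :
    ∃ I, M.Indep I ∧ I ⊆ A ∧ I.ncard = mrank M A := by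
  obtain ⟨I, hI⟩ := M.exists_isBasis A
  exact ⟨I, hI.indep, hI.subset, (mrank_eq_of_basis_s9 hA hI).symm⟩

end Aux

/-- Let `M` have finite ground set, `h ≥ 2`, and `X ⊆ M.E` with
`rank(X) = h`. Let `Z ⊆ cl(X)` be an `h`-uniform set that is inclusion-maximal among
`h`-uniform subsets of `cl(X)`. Then `cl(X)` equals the union of `cl(S)` over all
subsets `S ⊆ Z` with `|S| = h − 1`. -/
theorem statement9 {α : Type*} (M : Matroid α) (hE : M.E.Finite)
    (h : ℕ) (hh : 2 ≤ h)
    (X : Set α) (hXE : X ⊆ M.E) (hXrank : mrank M X = h)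
    (Z : Set α) (hZcl : Z ⊆ M.closure X) (hZ : HUniform M h Z)
    (hZmax : ∀ x ∈ M.closure X \ Z, ¬ HUniform M h (Z ∪ {x})) :
    M.closure X = ⋃ S ∈ {S : Set α | S ⊆ Z ∧ S.ncard = h - 1}, M.closure S := by
  have hclE : M.closure X ⊆ M.E := M.closure_subset_ground X
  have hclfin : (M.closure X).Finite := hE.subset hclE
  have hclrank : mrank M (M.closure X) = h := by
    rw [mrank_closure_eq hE X hXE, hXrank]
  have hZE : Z ⊆ M.E := hZcl.trans hclE
  have hZfin : Z.Finite := hE.subset hZE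
  -- |Z| ≥ h
  have hZcard : h ≤ Z.ncard := by
    obtain ⟨I, hIind, hIZ, hIcard⟩ := exists_indep_ncard_eq_mrank hZfin hZE
    rw [hZ.1] at hIcard
    exact hIcard ▸ ncard_le_ncard hIZ hZfin
  -- every (h-1)-subset of Z is independent of rank h-1
  have hkey : ∀ S ⊆ Z, S.ncard = h - 1 → M.Indep S ∧ mrank M S = h - 1 := by
    intro S hSZ hScard
    have hSfin : S.Finite := hZfin.subset hSZ
    obtain ⟨z, hzZ, hzS⟩ : ∃ z ∈ Z, z ∉ S := by
      by_contra hcon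
      push_neg at hcon
      have := ncard_le_ncard hcon hSfin
      omega
    have hins : (insert z S).ncard = h := by
      rw [ncard_insert_of_notMem hzS hSfin]; omega
    have hind : M.Indep (insert z S) := by
      refine indep_of_mrank_eq_ncard (hSfin.insert z) (insert_subset (hZE hzZ) (hSZ.trans hZE)) ?_
      rw [hins]
      exact hZ.2 _ (insert_subset hzZ hSZ) hins
    have hSind := hind.subset (subset_insert z S)
    exact ⟨hSind, by rw [mrank_indep_s9 hSind hSfin, hScard]⟩
  apply Set.eq_of_subset_of_subset
  · intro x hx
    have hxE : x ∈ M.E := hclE hx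
    simp only [mem_iUnion, mem_setOf_eq, exists_prop]
    by_cases hxZ : x ∈ Z
    · -- pick an (h-1)-subset of Z containing x
      have hd : h - 2 ≤ (Z \ {x}).ncard := by
        have := ncard_diff_singleton_add_one hxZ hZfin
        omega
      obtain ⟨T, hTZ, hTcard⟩ := Set.exists_subset_card_eq hd
      have hxT : x ∉ T := fun hxT => (hTZ hxT).2 rfl
      refine ⟨insert x T, ⟨insert_subset hxZ (hTZ.trans diff_subset), ?_⟩,
        M.mem_closure_of_mem' (mem_insert x T) hxE⟩
      rw [ncard_insert_of_notMem hxT (hZfin.subset (hTZ.trans diff_subset)), hTcard]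
      omega
    · have hxcl : x ∈ M.closure X \ Z := ⟨hx, hxZ⟩
      have hnu := hZmax x hxcl
      rw [union_singleton] at hnu
      have hins_rank : mrank M (insert x Z) = h := by
        refine le_antisymm ?_ ?_
        · rw [← hclrank]
          exact mrank_mono_s9 (insert_subset hx hZcl) hclfin
        · rw [← hZ.1]
          exact mrank_mono_s9 (subset_insert x Z) (hE.subset (insert_subset hxE hZE))
      rw [HUniform, not_and] at hnu
      push_neg at hnu
      obtain ⟨Y, hYsub, hYcard, hYrank⟩ := hnu hins_rank
      have hYfin : Y.Finite := (hZfin.insert x).subset hYsub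
      have hxY : x ∈ Y := by
        by_contra hxY
        exact hYrank (hZ.2 Y (fun y hy => ((hYsub hy).resolve_left (fun he => hxY (he ▸ hy)))) hYcard)
      have hYle : mrank M Y ≤ h - 1 := by
        have := mrank_le_ncard (M := M) hYfin
        rw [hYcard] at this
        omega
      have hSZ : Y \ {x} ⊆ Z := fun y hy => ((hYsub hy.1).resolve_left hy.2)
      have hScard : (Y \ {x}).ncard = h - 1 := by
        have := ncard_diff_singleton_add_one hxY hYfin
        omega
      obtain ⟨hSind, hSrank⟩ := hkey (Y \ {x}) hSZ hScard
      refine ⟨Y \ {x}, ⟨hSZ, hScard⟩, ?_⟩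
      by_contra hxclS
      have hindY : M.Indep Y := by
        have hYeq : Y = insert x (Y \ {x}) := by
          rw [insert_diff_singleton, insert_eq_of_mem hxY]
        rw [hYeq]
        exact Matroid.insert_indep_iff.mpr ⟨hSind, fun _ => ⟨hxE, hxclS⟩⟩
      exact hYrank (by rw [mrank_indep_s9 hindY hYfin, hYcard])
  · refine iUnion₂_subset fun S hS => ?_
    exact M.closure_subset_closure_of_subset_closure (hS.1.trans hZcl)
end
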